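/- Let d ≥ 1, let (X_i)_{i≥1} be i.i.d. ℝ^d-valued random variables whose common law has a bounded density f with respect to Lebesgue measure, let K : ℝ^d → ℝ be bounded, measurable and compactly supported, and let g : ℝ^d → ℝ be bounded and measurable. Let (Hₙ)_{n≥1} be a sequence of invertible d×d real matrices with n·|det Hₙ| → ∞ as n → ∞. Then for every x ∈ ℝ^d, the random variables W₁ₙ(x) − ∫_{ℝ^d} K(p) g(x + Hₙp) f(x + Hₙp) dp, where W₁ₙ(x) = (1/n) ∑_{i=1}^n K_{Hₙ}(X_i − x) g(X_i), converge to 0 in probability as n → ∞. -/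

import Mathlib

open MeasureTheory ProbabilityTheory Filter
open scoped ENNReal NNReal Topology

noncomputable section

variable {d : ℕ}

lemma continuous_mulVec' (M : Matrix (Fin d) (Fin d) ℝ) :
    Continuous fun p : Fin d → ℝ => M.mulVec p := by
  have h := LinearMap.continuous_of_finiteDimensional (Matrix.mulVecLin M)
  exact h

lemma measurable_affineMap' (M : Matrix (Fin d) (Fin d) ℝ) (c : Fin d → ℝ) :
    Measurable fun p : Fin d → ℝ => c + M.mulVec p :=
  (continuous_const.add (continuous_mulVec' M)).measurable

lemma map_affine' (M : Matrix (Fin d) (Fin d) ℝ) (hM : M.det ≠ 0) (c : Fin d → ℝ) :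
    Measure.map (fun p : Fin d → ℝ => c + M.mulVec p) volume
      = ENNReal.ofReal |M.det|⁻¹ • volume := by
  have h1 : (fun p : Fin d → ℝ => c + M.mulVec p)
      = (fun y => c + y) ∘ (Matrix.toLin' M) := by
    funext p; simp [Matrix.toLin'_apply]
  rw [h1, ← Measure.map_map (measurable_const_add c)
      (LinearMap.continuous_of_finiteDimensional _).measurable,
    Real.map_matrix_volume_pi_eq_smul_volume_pi hM, Measure.map_smul,
    map_add_left_eq_self, abs_inv]

lemma integral_affine' (M : Matrix (Fin d) (Fin d) ℝ) (hM : M.det ≠ 0) (c : Fin d → ℝ)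
    (F : (Fin d → ℝ) → ℝ) (hF : Measurable F) :
    ∫ y, F y = |M.det| * ∫ p, F (c + M.mulVec p) := by
  have hdet : (0:ℝ) < |M.det| := abs_pos.2 hM
  have h1 : ∫ p, F (c + M.mulVec p)
      = ∫ y, F y ∂(Measure.map (fun p : Fin d → ℝ => c + M.mulVec p) volume) :=
    (integral_map (measurable_affineMap' M c).aemeasurable
      hF.stronglyMeasurable.aestronglyMeasurable).symm
  rw [h1, map_affine' M hM c, integral_smul_measure,
    ENNReal.toReal_ofReal (by positivity), smul_eq_mul, ← mul_assoc,
    mul_inv_cancel₀ hdet.ne', one_mul]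

lemma integrable_of_bdd_compact' (K : (Fin d → ℝ) → ℝ) (hKmeas : Measurable K)
    {C : ℝ} (hC : ∀ u, |K u| ≤ C) (hsupp : HasCompactSupport K) :
    Integrable K volume := by
  rw [← integrableOn_iff_integrable_of_support_subset (subset_tsupport K)]
  exact Measure.integrableOn_of_bounded hsupp.measure_lt_top.ne
    hKmeas.aestronglyMeasurable
    (Filter.Eventually.of_forall fun y => by simpa [Real.norm_eq_abs] using hC y)

lemma integrable_comp_affine' (M : Matrix (Fin d) (Fin d) ℝ) (hM : M.det ≠ 0) (c : Fin d → ℝ)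
    {F : (Fin d → ℝ) → ℝ} (hF : Measurable F) (hint : Integrable F volume) :
    Integrable (fun y => F (c + M.mulVec y)) volume := by
  have h2 : Integrable F (Measure.map (fun p : Fin d → ℝ => c + M.mulVec p) volume) := by
    rw [map_affine' M hM c]
    exact hint.smul_measure ENNReal.ofReal_ne_top
  have h := (integrable_map_measure (μ := (volume : Measure (Fin d → ℝ)))
    hF.stronglyMeasurable.aestronglyMeasurable
    (measurable_affineMap' M c).aemeasurable).mp h2
  exact h


/-- The rescaled kernel `K_H(v) = |det H|⁻¹ * K (H⁻¹ v)`. -/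
def kernelScaled {d : ℕ} (H : Matrix (Fin d) (Fin d) ℝ) (K : (Fin d → ℝ) → ℝ)
    (v : Fin d → ℝ) : ℝ :=
  |H.det|⁻¹ * K (H⁻¹.mulVec v)

/-- Conclusion of Lemma 1: if `n |det Hₙ| → ∞`, then
`W₁ₙ(x) − ∫ K(p) g(x + Hₙ p) f(x + Hₙ p) dp → 0` in probability. -/
theorem W1n_tendsto_inProbability {d : ℕ} (hd : 1 ≤ d)
    {Ω : Type*} [MeasurableSpace Ω] (μ : Measure Ω) [IsProbabilityMeasure μ]
    (X : ℕ → Ω → (Fin d → ℝ)) (hXmeas : ∀ i, Measurable (X i))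
    (hindep : iIndepFun X μ)
    (f : (Fin d → ℝ) → ℝ) (hfmeas : Measurable f) (hfnonneg : ∀ y, 0 ≤ f y)
    (hfbd : ∃ C, ∀ y, f y ≤ C)
    (hlaw : ∀ i, μ.map (X i) = volume.withDensity (fun y => ENNReal.ofReal (f y)))
    (Hseq : ℕ → Matrix (Fin d) (Fin d) ℝ) (hHinv : ∀ n, (Hseq n).det ≠ 0)
    (hHlim : Tendsto (fun n : ℕ => (n : ℝ) * |(Hseq n).det|) atTop atTop)
    (K : (Fin d → ℝ) → ℝ) (hKmeas : Measurable K) (hKbd : ∃ C, ∀ u, |K u| ≤ C)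
    (hKsupp : HasCompactSupport K)
    (g : (Fin d → ℝ) → ℝ) (hgmeas : Measurable g) (hgbd : ∃ C, ∀ u, |g u| ≤ C)
    (x : Fin d → ℝ) :
    ∀ δ : ℝ, 0 < δ →
      Tendsto (fun n : ℕ =>
          μ {ω | δ < |(n : ℝ)⁻¹ *
              (∑ i ∈ Finset.range n, kernelScaled (Hseq n) K (X i ω - x) * g (X i ω)) -
            ∫ p, K p * g (x + (Hseq n).mulVec p) * f (x + (Hseq n).mulVec p)|})
        atTop (𝓝 0) := by
  intro δ hδ
  obtain ⟨Cf, hCf⟩ := hfbd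
  obtain ⟨CK, hCK⟩ := hKbd
  obtain ⟨Cg, hCg⟩ := hgbd
  have hCf0 : 0 ≤ Cf := le_trans (hfnonneg x) (hCf x)
  have hCK0 : 0 ≤ CK := le_trans (abs_nonneg _) (hCK x)
  have hCg0 : 0 ≤ Cg := le_trans (abs_nonneg _) (hCg x)
  have hKint : Integrable K volume := integrable_of_bdd_compact' K hKmeas hCK hKsupp
  set I : ℝ := ∫ p, |K p| with hIdef
  have hI0 : 0 ≤ I := integral_nonneg fun p => abs_nonneg _
  set A : ℝ := Cf * CK * Cg ^ 2 * I with hAdef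
  have key : ∀ n : ℕ, 1 ≤ n →
      μ {ω | δ < |(n : ℝ)⁻¹ *
              (∑ i ∈ Finset.range n, kernelScaled (Hseq n) K (X i ω - x) * g (X i ω)) -
            ∫ p, K p * g (x + (Hseq n).mulVec p) * f (x + (Hseq n).mulVec p)|}
        ≤ ENNReal.ofReal (A / (δ ^ 2 * ((n : ℝ) * |(Hseq n).det|))) := by
    intro n hn
    set H := Hseq n with hHdef
    have hH : H.det ≠ 0 := hHinv n
    have hdetpos : (0 : ℝ) < |H.det| := abs_pos.2 hH
    have hnpos : (0 : ℝ) < (n : ℝ) := by exact_mod_cast hn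
    set φ : (Fin d → ℝ) → ℝ := fun y => kernelScaled H K (y - x) * g y with hφdef
    have hmul : Measurable fun y : Fin d → ℝ => H⁻¹.mulVec (y - x) :=
      (continuous_mulVec' H⁻¹).measurable.comp (measurable_id.sub measurable_const)
    have hφm : Measurable φ := by
      unfold φ
      unfold kernelScaled
      exact (measurable_const.mul (hKmeas.comp hmul)).mul hgmeas
    have hφbd : ∀ y, |φ y| ≤ |H.det|⁻¹ * (CK * Cg) := by
      intro y
      have h1 : |φ y| = |H.det|⁻¹ * (|K (H⁻¹.mulVec (y - x))| * |g y|) := by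
        simp [hφdef, kernelScaled, abs_mul, abs_inv, abs_abs, mul_assoc]
      rw [h1]
      exact mul_le_mul_of_nonneg_left
        (mul_le_mul (hCK _) (hCg _) (abs_nonneg _) hCK0) (by positivity)
    have transfer : ∀ (ψ : (Fin d → ℝ) → ℝ), Measurable ψ → ∀ i : ℕ,
        ∫ ω, ψ (X i ω) ∂μ = ∫ y, f y * ψ y := by
      intro ψ hψ i
      rw [← integral_map (hXmeas i).aemeasurable hψ.stronglyMeasurable.aestronglyMeasurable,
        hlaw i]
      have h0 : (fun y => ENNReal.ofReal (f y))
          = fun y => ((fun y => (f y).toNNReal) y : ℝ≥0∞) := rfl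
      rw [h0, integral_withDensity_eq_integral_smul hfmeas.real_toNNReal]
      congr 1
      funext y
      simp [NNReal.smul_def, Real.coe_toNNReal _ (hfnonneg y)]
    set m : ℝ := ∫ p, K p * g (x + H.mulVec p) * f (x + H.mulVec p) with hmdef
    have hmulinv : ∀ p : Fin d → ℝ, H⁻¹.mulVec (x + H.mulVec p - x) = p := by
      intro p
      rw [add_sub_cancel_left, Matrix.mulVec_mulVec,
        Matrix.nonsing_inv_mul H (Ne.isUnit hH), Matrix.one_mulVec]
    have hEφ : ∀ i : ℕ, ∫ ω, φ (X i ω) ∂μ = m := by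
      intro i
      rw [transfer φ hφm i, integral_affine' H hH x (fun y => f y * φ y) (hfmeas.mul hφm)]
      have h1 : ∀ p, f (x + H.mulVec p) * φ (x + H.mulVec p)
          = |H.det|⁻¹ * (K p * g (x + H.mulVec p) * f (x + H.mulVec p)) := by
        intro p
        simp only [hφdef, kernelScaled, hmulinv p]
        ring
      simp_rw [h1]
      rw [integral_const_mul, ← mul_assoc, mul_inv_cancel₀ hdetpos.ne', one_mul, hmdef]
    have hmem : ∀ i : ℕ, MemLp (fun ω => φ (X i ω)) 2 μ := by
      intro i
      apply MemLp.of_bound ((hφm.comp (hXmeas i)).aestronglyMeasurable)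
        (|H.det|⁻¹ * (CK * Cg))
      exact Filter.Eventually.of_forall fun ω => by
        simpa [Real.norm_eq_abs] using hφbd (X i ω)
    -- variance bound
    have hHinvdet : H⁻¹.det ≠ 0 := by
      rw [Matrix.det_nonsing_inv]
      simp [Ring.inverse_eq_inv', hH]
    have hKcomp_meas : Measurable fun y : Fin d → ℝ => |K (H⁻¹.mulVec (y - x))| :=
      (hKmeas.comp hmul).abs
    have hKcomp_int : Integrable (fun y : Fin d → ℝ => |K (H⁻¹.mulVec (y - x))|) volume := by
      have h1 : (fun y : Fin d → ℝ => |K (H⁻¹.mulVec (y - x))|)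
          = fun y => (fun v => |K v|) (-(H⁻¹.mulVec x) + H⁻¹.mulVec y) := by
        funext y
        rw [Matrix.mulVec_sub, sub_eq_neg_add]
      rw [h1]
      exact integrable_comp_affine' H⁻¹ hHinvdet _ hKmeas.abs hKint.abs
    have hKcomp_val : ∫ y, |K (H⁻¹.mulVec (y - x))| = |H.det| * I := by
      rw [integral_affine' H hH x _ hKcomp_meas]
      congr 1
      apply integral_congr_ae
      filter_upwards with p
      rw [hmulinv p]
    set B : ℝ := Cf * CK * Cg ^ 2 * (|H.det|⁻¹ * |H.det|⁻¹) with hBdef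
    have hB0 : 0 ≤ B := by positivity
    have hptwise : ∀ y, f y * φ y ^ 2 ≤ B * |K (H⁻¹.mulVec (y - x))| := by
      intro y
      have he : φ y = |H.det|⁻¹ * K (H⁻¹.mulVec (y - x)) * g y := by
        simp [hφdef, kernelScaled, mul_assoc]
      have hKu : K (H⁻¹.mulVec (y - x)) ^ 2 ≤ CK * |K (H⁻¹.mulVec (y - x))| := by
        have h2 : K (H⁻¹.mulVec (y - x)) ^ 2
            = |K (H⁻¹.mulVec (y - x))| * |K (H⁻¹.mulVec (y - x))| := by
          rw [abs_mul_abs_self, sq]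
        rw [h2]
        exact mul_le_mul_of_nonneg_right (hCK _) (abs_nonneg _)
      have hgy : g y ^ 2 ≤ Cg ^ 2 :=
        sq_le_sq' (neg_le_of_abs_le (hCg y)) (le_of_abs_le (hCg y))
      calc f y * φ y ^ 2
          = f y * (|H.det|⁻¹ * |H.det|⁻¹ * (K (H⁻¹.mulVec (y - x)) ^ 2 * g y ^ 2)) := by
            rw [he]; ring
        _ ≤ Cf * (|H.det|⁻¹ * |H.det|⁻¹ * ((CK * |K (H⁻¹.mulVec (y - x))|) * Cg ^ 2)) := by
            apply mul_le_mul (hCf y) ?_ (by positivity) hCf0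
            apply mul_le_mul_of_nonneg_left ?_ (by positivity)
            exact mul_le_mul hKu hgy (sq_nonneg _) (by positivity)
        _ = B * |K (H⁻¹.mulVec (y - x))| := by rw [hBdef]; ring
    have hVar : ∀ i : ℕ, variance (fun ω => φ (X i ω)) μ ≤ A / |H.det| := by
      intro i
      have h1 := variance_le_expectation_sq (μ := μ) (X := fun ω => φ (X i ω))
        ((hφm.comp (hXmeas i)).aestronglyMeasurable)
      have h2 : μ[(fun ω => φ (X i ω)) ^ 2] = ∫ y, f y * φ y ^ 2 := by
        have h3 : ((fun ω => φ (X i ω)) ^ 2) = fun ω => (fun y => φ y ^ 2) (X i ω) := by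
          funext ω; simp
        rw [h3, transfer _ (hφm.pow_const 2) i]
      have h4 : ∫ y, f y * φ y ^ 2 ≤ B * (|H.det| * I) := by
        calc ∫ y, f y * φ y ^ 2
            ≤ ∫ y, B * |K (H⁻¹.mulVec (y - x))| := by
              apply integral_mono_of_nonneg
              · exact Filter.Eventually.of_forall fun y =>
                  mul_nonneg (hfnonneg y) (sq_nonneg _)
              · exact hKcomp_int.const_mul B
              · exact Filter.Eventually.of_forall hptwise
          _ = B * (|H.det| * I) := by rw [integral_const_mul, hKcomp_val]
      have h5 : B * (|H.det| * I) = A / |H.det| := by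
        have hinv : |H.det|⁻¹ * |H.det| = 1 := inv_mul_cancel₀ hdetpos.ne'
        rw [hBdef, hAdef, div_eq_mul_inv]
        linear_combination (Cf * CK * Cg ^ 2 * I * |H.det|⁻¹) * hinv
      exact le_trans h1 (le_trans (le_of_eq h2) (le_trans h4 (le_of_eq h5)))
    -- Chebyshev
    set S : Ω → ℝ := ∑ i ∈ Finset.range n, fun ω => φ (X i ω) with hSdef
    have hSapply : ∀ ω, S ω = ∑ i ∈ Finset.range n, φ (X i ω) := by
      intro ω; rw [hSdef]; simp
    have hSmem : MemLp S 2 μ := memLp_finset_sum' _ fun i _ => hmem i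
    have hpair : Set.Pairwise ↑(Finset.range n)
        fun i j => IndepFun (fun ω => φ (X i ω)) (fun ω => φ (X j ω)) μ := by
      intro i _ j _ hij
      exact (hindep.indepFun hij).comp hφm hφm
    have hvarS : variance S μ ≤ (n : ℝ) * (A / |H.det|) := by
      rw [hSdef, IndepFun.variance_sum (fun i _ => hmem i) hpair]
      calc ∑ i ∈ Finset.range n, variance (fun ω => φ (X i ω)) μ
          ≤ ∑ _i ∈ Finset.range n, (A / |H.det|) :=
            Finset.sum_le_sum fun i _ => hVar i
        _ = (n : ℝ) * (A / |H.det|) := by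
            simp [Finset.sum_const, nsmul_eq_mul]
    have hES : μ[S] = (n : ℝ) * m := by
      have h1 : μ[S] = ∫ ω, ∑ i ∈ Finset.range n, φ (X i ω) ∂μ := by
        apply integral_congr_ae
        filter_upwards with ω using hSapply ω
      rw [h1, integral_finset_sum _ fun i _ => (hmem i).integrable (by norm_num)]
      simp_rw [hEφ]
      simp [Finset.sum_const, Finset.card_range, nsmul_eq_mul]
    have hcheb := meas_ge_le_variance_div_sq (μ := μ) hSmem (mul_pos hnpos hδ)
    refine le_trans (le_trans (measure_mono ?_) hcheb) ?_
    · intro ω hω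
      simp only [Set.mem_setOf_eq] at hω ⊢
      rw [hES]
      have hsum : (∑ i ∈ Finset.range n, kernelScaled H K (X i ω - x) * g (X i ω)) = S ω := by
        rw [hSapply]
      rw [hsum] at hω
      have h1 : (n : ℝ) * |(n : ℝ)⁻¹ * S ω - m| = |S ω - (n : ℝ) * m| := by
        rw [← abs_of_pos hnpos, ← abs_mul]
        congr 1
        field_simp
        rw [abs_of_pos hnpos]
      have h2 : (n : ℝ) * δ < (n : ℝ) * |(n : ℝ)⁻¹ * S ω - m| :=
        mul_lt_mul_of_pos_left hω hnpos
      rw [h1] at h2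
      exact le_of_lt h2
    · apply ENNReal.ofReal_le_ofReal
      calc variance S μ / ((n : ℝ) * δ) ^ 2
          ≤ ((n : ℝ) * (A / |H.det|)) / ((n : ℝ) * δ) ^ 2 := by gcongr
        _ = A / (δ ^ 2 * ((n : ℝ) * |H.det|)) := by
            field_simp
  have hbound : Tendsto
      (fun n : ℕ => ENNReal.ofReal (A / (δ ^ 2 * ((n : ℝ) * |(Hseq n).det|))))
      atTop (𝓝 0) := by
    rw [← ENNReal.ofReal_zero]
    apply ENNReal.tendsto_ofReal
    exact tendsto_const_nhds.div_atTop (hHlim.const_mul_atTop (by positivity))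
  refine tendsto_of_tendsto_of_tendsto_of_le_of_le' tendsto_const_nhds hbound ?_ ?_
  · exact Filter.Eventually.of_forall fun n => zero_le
  · filter_upwards [eventually_ge_atTop 1] with n hn using key n hn

end
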